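/- Detailed balance for the discrete multiple-try Metropolis sampler with toggled predictor inclusion (Lemma 2, DMTM). For each j ∈ {1,…,p} let ω_j(γ) ∈ [0,1] be a selection probability that depends on γ only through the indicator of j ∈ γ (i.e., ω_j(γ) = a_j if j ∈ γ and ω_j(γ) = b_j if j ∉ γ, for fixed a_j, b_j ∈ [0,1]). Fix an inclusion vector γ, a predictor k, and set γ' = tog(k, γ); assume ω_k(γ) > 0 and ω_k(γ') > 0. Define T(γ, γ') as the sum, over all pairs (η, η') of subsets of {1,…,p} with k ∈ η and k ∈ η', of ω_k(γ)·∏_{j ≠ k} [ω_j(γ)^{1[j∈η]}·(1 − ω_j(γ))^{1[j∉η]}·ω_j(γ')^{1[j∈η']}·(1 − ω_j(γ'))^{1[j∉η']}]·(π(γ') / Σ_{j∈η} π(tog(j, γ)))·min{1, (ω_k(γ')·Σ_{j∈η} π(tog(j, γ))) / (ω_k(γ)·Σ_{j∈η'} π(tog(j, γ')))}, and define T(γ', γ) by the same formula with the roles of γ and γ' interchanged. Then π(γ)·T(γ, γ') = π(γ')·T(γ', γ). -/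

import Mathlib

open Finset

variable {p : ℕ}

/-- `tog k γ` flips the membership of predictor `k` in the inclusion vector `γ`. -/
def tog (k : Fin p) (γ : Finset (Fin p)) : Finset (Fin p) :=
  if k ∈ γ then γ.erase k else insert k γ

/-- The DMTM transition kernel from `γ` to `γ' = tog k γ`: the sum over all pairs
`(η, η')` of subsets of `{1,…,p}` containing `k` of the selection probability of the
pair, times the probability of proposing `γ'` from the forward set, times the
Metropolis acceptance probability. -/
noncomputable def dmtmT (π : Finset (Fin p) → ℝ)
    (ω : Finset (Fin p) → Fin p → ℝ) (k : Fin p)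
    (γ γ' : Finset (Fin p)) : ℝ :=
  ∑ q ∈ (Finset.univ : Finset (Finset (Fin p) × Finset (Fin p))).filter
      (fun q => k ∈ q.1 ∧ k ∈ q.2),
    ω γ k *
      (∏ j ∈ Finset.univ.erase k,
        ((if j ∈ q.1 then ω γ j else 1 - ω γ j) *
          (if j ∈ q.2 then ω γ' j else 1 - ω γ' j))) *
      (π γ' / ∑ j ∈ q.1, π (tog j γ)) *
      min 1 ((ω γ' k * ∑ j ∈ q.1, π (tog j γ)) /
        (ω γ k * ∑ j ∈ q.2, π (tog j γ')))

/-- Detailed balance for the discrete multiple-try Metropolis sampler with toggled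
predictor inclusion (Lemma 2, DMTM). -/
theorem dmtm_detailed_balance
    (π : Finset (Fin p) → ℝ) (hπ : ∀ γ, 0 < π γ)
    (a b : Fin p → ℝ)
    (ha : ∀ j, a j ∈ Set.Icc (0 : ℝ) 1) (hb : ∀ j, b j ∈ Set.Icc (0 : ℝ) 1)
    (ω : Finset (Fin p) → Fin p → ℝ)
    (hω : ∀ γ j, ω γ j = if j ∈ γ then a j else b j)
    (γ : Finset (Fin p)) (k : Fin p)
    (γ' : Finset (Fin p)) (hγ' : γ' = tog k γ)
    (hk1 : 0 < ω γ k) (hk2 : 0 < ω γ' k) :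
    π γ * dmtmT π ω k γ γ' = π γ' * dmtmT π ω k γ' γ := by
  unfold dmtmT
  rw [Finset.mul_sum, Finset.mul_sum]
  refine Finset.sum_equiv (Equiv.prodComm _ _) (fun q => by simp [and_comm]) ?_
  intro q hq
  simp only [Finset.mem_filter] at hq
  obtain ⟨-, hk1q, hk2q⟩ := hq
  simp only [Equiv.prodComm_apply, Prod.fst_swap, Prod.snd_swap]
  set S := ∑ j ∈ q.1, π (tog j γ) with hS
  set S' := ∑ j ∈ q.2, π (tog j γ') with hS'
  have hSpos : 0 < S := Finset.sum_pos (fun i _ => hπ _) ⟨k, hk1q⟩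
  have hS'pos : 0 < S' := Finset.sum_pos (fun i _ => hπ _) ⟨k, hk2q⟩
  have hx : 0 < ω γ k * S' := mul_pos hk1 hS'pos
  have hy : 0 < ω γ' k * S := mul_pos hk2 hSpos
  have hprod : (∏ j ∈ Finset.univ.erase k,
      ((if j ∈ q.2 then ω γ' j else 1 - ω γ' j) *
        (if j ∈ q.1 then ω γ j else 1 - ω γ j))) =
      ∏ j ∈ Finset.univ.erase k,
      ((if j ∈ q.1 then ω γ j else 1 - ω γ j) *
        (if j ∈ q.2 then ω γ' j else 1 - ω γ' j)) :=
    Finset.prod_congr rfl (fun _ _ => mul_comm _ _)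
  erw [hprod]
  have h1 : min 1 ((ω γ' k * S) / (ω γ k * S')) =
      min (ω γ k * S') (ω γ' k * S) / (ω γ k * S') := by
    rw [← min_div_div_right hx.le, div_self hx.ne']
  have h2 : min 1 ((ω γ k * S') / (ω γ' k * S)) =
      min (ω γ k * S') (ω γ' k * S) / (ω γ' k * S) := by
    rw [← min_div_div_right hy.le, div_self hy.ne', min_comm]
  rw [h1, h2]
  set m := min (ω γ k * S') (ω γ' k * S)
  field_simp
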